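/- ≼-subsumption: for any context Γ, any term t and any unit types U, U' of the Add type system such that U ≼ U' and no free type variable of U occurs in Γ, if Γ ⊢ t : U is derivable in Add then Γ ⊢ t : U' is derivable in Add. -/

import Mathlib

set_option maxHeartbeats 1000000

/-! ## Terms of the non-deterministic call-by-value λ-calculus (de Bruijn indices) -/

inductive Tm : Type
  | var : ℕ → Tm
  | lam : Tm → Tm
  | app : Tm → Tm → Tm
  | add : Tm → Tm → Tm
  | zero : Tm
  deriving DecidableEq

namespace Tm

/-- Values: variables and abstractions. -/
inductive IsValue : Tm → Prop
  | var (n : ℕ) : IsValue (var n)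
  | lam (t : Tm) : IsValue (lam t)

/-- de Bruijn shifting: add `d` to every variable index `≥ c`. -/
def shift (d c : ℕ) : Tm → Tm
  | var n => if n < c then var n else var (n + d)
  | lam t => lam (shift d (c + 1) t)
  | app t u => app (shift d c t) (shift d c u)
  | add t u => add (shift d c t) (shift d c u)
  | zero => zero

/-- Capture-avoiding substitution of the variable `k` by `v` (removing the binder). -/
def subst (k : ℕ) (v : Tm) : Tm → Tm
  | var n => if n = k then shift k 0 v else if k < n then var (n - 1) else var n
  | lam t => lam (subst (k + 1) v t)
  | app t u => app (subst k v t) (subst k v u)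
  | add t u => add (subst k v t) (subst k v u)
  | zero => zero

/-- `ClosedUnder k t`: every free variable of `t` has index `< k`. -/
def ClosedUnder (k : ℕ) : Tm → Prop
  | var n => n < k
  | lam t => ClosedUnder (k + 1) t
  | app t u => ClosedUnder k t ∧ ClosedUnder k u
  | add t u => ClosedUnder k t ∧ ClosedUnder k u
  | zero => True

/-- Closed terms. -/
def Closed (t : Tm) : Prop := ClosedUnder 0 t

end Tm

open Tm

/-- The AC-equivalence on terms: the least congruence making `+`
associative and commutative (terms are considered modulo `Aeq`). -/
inductive Aeq : Tm → Tm → Prop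
  | refl (t : Tm) : Aeq t t
  | symm : Aeq t u → Aeq u t
  | trans : Aeq t u → Aeq u s → Aeq t s
  | comm (t u : Tm) : Aeq (.add t u) (.add u t)
  | assoc (t u s : Tm) : Aeq (.add t (.add u s)) (.add (.add t u) s)
  | lamCongr : Aeq t t' → Aeq (.lam t) (.lam t')
  | appCongr : Aeq t t' → Aeq u u' → Aeq (.app t u) (.app t' u')
  | addCongr : Aeq t t' → Aeq u u' → Aeq (.add t u) (.add t' u')

/-- One-step reduction (the five rewrite rules plus β, closed under all
contexts, and performed modulo the AC-equivalence of terms). -/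
inductive Step : Tm → Tm → Prop
  | distrRight (t u s : Tm) : Step (.app (.add t u) s) (.add (.app t s) (.app u s))
  | distrLeft (t u s : Tm) : Step (.app t (.add u s)) (.add (.app t u) (.app t s))
  | zeroApp (t : Tm) : Step (.app .zero t) .zero
  | appZero (t : Tm) : Step (.app t .zero) .zero
  | addZero (t : Tm) : Step (.add t .zero) t
  | beta (t v : Tm) : IsValue v → Step (.app (.lam t) v) (Tm.subst 0 v t)
  | appLeft : Step t t' → Step (.app t u) (.app t' u)
  | appRight : Step u u' → Step (.app t u) (.app t u')
  | addLeft : Step t t' → Step (.add t u) (.add t' u)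
  | addRight : Step u u' → Step (.add t u) (.add t u')
  | lamCongr : Step t t' → Step (.lam t) (.lam t')
  | ac : Aeq t t' → Step t' u' → Aeq u' u → Step t u

/-- Strong normalisation of a term: accessibility of the inverse reduction. -/
def SN (t : Tm) : Prop := Acc (fun a b => Step b a) t

/-- The set of strongly normalising closed terms. -/
def SNset : Set Tm := {t | Closed t ∧ SN t}

/-- Pseudo-values: abstractions and sums of pseudo-values. -/
inductive PseudoValue : Tm → Prop
  | lam (t : Tm) : PseudoValue (.lam t)
  | add : PseudoValue t → PseudoValue u → PseudoValue (.add t u)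

/-- Neutral terms: closed terms that are not pseudo-values. -/
def Neutral (t : Tm) : Prop := Closed t ∧ ¬ PseudoValue t

/-- The set of one-step reducts of `t`. -/
def Red (t : Tm) : Set Tm := {u | Step t u}

/-- The set of reducts (in any number of steps, including zero) of terms of `S`. -/
def RedStar (S : Set Tm) : Set Tm := {u | ∃ t ∈ S, Relation.ReflTransGen Step t u}

/-- The closure of a set of terms under (CR3). -/
inductive Clo (S : Set Tm) : Tm → Prop
  | base {t : Tm} : t ∈ S → Clo S t
  | step {t : Tm} : Neutral t → (∀ u, Step t u → Clo S u) → Clo S t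

/-- `clo S`: the least set containing `S` and closed under (CR3). -/
def clo (S : Set Tm) : Set Tm := {t | Clo S t}

/-- Reducibility candidates. -/
structure IsCandidate (A : Set Tm) : Prop where
  cr1 : A ⊆ SNset
  cr2 : ∀ t ∈ A, Red t ⊆ A
  cr3 : ∀ t, Neutral t → Red t ⊆ A → t ∈ A

/-- The arrow operator on sets of closed terms. -/
def CArrow (A B : Set Tm) : Set Tm := {t | Closed t ∧ ∀ u ∈ A, Tm.app t u ∈ B}

/-- The sum of two sets of (AC-classes of) terms. -/
def CSum (A B : Set Tm) : Set Tm := {s | ∃ t ∈ A, ∃ u ∈ B, Aeq s (Tm.add t u)}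

/-- The ⊞ operator on reducibility candidates. -/
def CPlus (A B : Set Tm) : Set Tm := clo (CSum A B ∪ A ∪ B)

/-! ## Types of the Add type system -/

mutual
  /-- Unit types. -/
  inductive UTy : Type
    | var : ℕ → UTy
    | arrow : UTy → Ty → UTy
    | all : UTy → UTy

  /-- Types. -/
  inductive Ty : Type
    | unit : UTy → Ty
    | add : Ty → Ty → Ty
    | zero : Ty
end

mutual
  /-- Shifting of type variables in unit types. -/
  def UTy.shift (d c : ℕ) : UTy → UTy
    | .var n => if n < c then .var n else .var (n + d)
    | .arrow U T => .arrow (UTy.shift d c U) (Ty.shift d c T)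
    | .all U => .all (UTy.shift d (c + 1) U)

  /-- Shifting of type variables in types. -/
  def Ty.shift (d c : ℕ) : Ty → Ty
    | .unit U => .unit (UTy.shift d c U)
    | .add T R => .add (Ty.shift d c T) (Ty.shift d c R)
    | .zero => .zero
end

mutual
  /-- Substitution of the (bound) type variable `k` by `V` in a unit type. -/
  def UTy.subst (k : ℕ) (V : UTy) : UTy → UTy
    | .var n => if n = k then UTy.shift k 0 V else if k < n then .var (n - 1) else .var n
    | .arrow U T => .arrow (UTy.subst k V U) (Ty.subst k V T)
    | .all U => .all (UTy.subst (k + 1) V U)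

  /-- Substitution of the (bound) type variable `k` by `V` in a type. -/
  def Ty.subst (k : ℕ) (V : UTy) : Ty → Ty
    | .unit U => .unit (UTy.subst k V U)
    | .add T R => .add (Ty.subst k V T) (Ty.subst k V R)
    | .zero => .zero
end

/-- Iterated substitution `U[V⃗/X⃗]` for a unit type under `|Vs|` quantifiers. -/
def UTy.msubst (Vs : List UTy) (U : UTy) : UTy := Vs.foldl (fun A V => UTy.subst 0 V A) U

/-- Iterated substitution `T[V⃗/X⃗]` for a type under `|Vs|` quantifiers. -/
def Ty.msubst (Vs : List UTy) (T : Ty) : Ty := Vs.foldl (fun A V => Ty.subst 0 V A) T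

mutual
  /-- Substitution of the free type variable `X` (seen at depth `c`) by `V` in a unit type. -/
  def UTy.replAux (X : ℕ) (V : UTy) (c : ℕ) : UTy → UTy
    | .var n => if n = X + c then UTy.shift c 0 V else .var n
    | .arrow U T => .arrow (UTy.replAux X V c U) (Ty.replAux X V c T)
    | .all U => .all (UTy.replAux X V (c + 1) U)

  /-- Substitution of the free type variable `X` (seen at depth `c`) by `V` in a type. -/
  def Ty.replAux (X : ℕ) (V : UTy) (c : ℕ) : Ty → Ty
    | .unit U => .unit (UTy.replAux X V c U)
    | .add T R => .add (Ty.replAux X V c T) (Ty.replAux X V c R)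
    | .zero => .zero
end

/-- Capture-avoiding substitution `U[V/X]` of a free type variable. -/
def UTy.repl (X : ℕ) (V : UTy) (U : UTy) : UTy := UTy.replAux X V 0 U

/-- Capture-avoiding substitution `T[V/X]` of a free type variable. -/
def Ty.repl (X : ℕ) (V : UTy) (T : Ty) : Ty := Ty.replAux X V 0 T

mutual
  /-- Abstraction of the free type variable `X` (at depth `c`), used to form `∀X.U`. -/
  def UTy.absAux (X c : ℕ) : UTy → UTy
    | .var n => if n = X + c then .var c else if c ≤ n then .var (n + 1) else .var n
    | .arrow U T => .arrow (UTy.absAux X c U) (Ty.absAux X c T)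
    | .all U => .all (UTy.absAux X (c + 1) U)

  /-- Abstraction of the free type variable `X` (at depth `c`) in a type. -/
  def Ty.absAux (X c : ℕ) : Ty → Ty
    | .unit U => .unit (UTy.absAux X c U)
    | .add T R => .add (Ty.absAux X c T) (Ty.absAux X c R)
    | .zero => .zero
end

/-- `∀X.U`: universal quantification of the free type variable `X` in `U`. -/
def UTy.genAll (X : ℕ) (U : UTy) : UTy := .all (UTy.absAux X 0 U)

mutual
  /-- `X` occurs free in a unit type. -/
  def UTy.Free (n : ℕ) : UTy → Prop
    | .var m => m = n
    | .arrow U T => UTy.Free n U ∨ Ty.Free n T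
    | .all U => UTy.Free (n + 1) U

  /-- `X` occurs free in a type. -/
  def Ty.Free (n : ℕ) : Ty → Prop
    | .unit U => UTy.Free n U
    | .add T R => Ty.Free n T ∨ Ty.Free n R
    | .zero => False
end

mutual
  /-- Equivalence of unit types (the least congruence making `+` on types
  associative, commutative, with neutral element `𝟘`). -/
  inductive UEq : UTy → UTy → Prop
    | refl (U : UTy) : UEq U U
    | symm : UEq U V → UEq V U
    | trans : UEq U V → UEq V W → UEq U W
    | arrow : UEq U U' → TEq T T' → UEq (.arrow U T) (.arrow U' T')
    | all : UEq U U' → UEq (.all U) (.all U')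

  /-- Equivalence of types: the least congruence such that
  `T+R ≡ R+T`, `T+(R+S) ≡ (T+R)+S` and `T+𝟘 ≡ T`. -/
  inductive TEq : Ty → Ty → Prop
    | refl (T : Ty) : TEq T T
    | symm : TEq T R → TEq R T
    | trans : TEq T R → TEq R S → TEq T S
    | unit : UEq U U' → TEq (.unit U) (.unit U')
    | addCongr : TEq T T' → TEq R R' → TEq (.add T R) (.add T' R')
    | comm (T R : Ty) : TEq (.add T R) (.add R T)
    | assoc (T R S : Ty) : TEq (.add T (.add R S)) (.add (.add T R) S)
    | zero (T : Ty) : TEq (.add T .zero) T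
end

/-- `Σ_{i} T_i`, with the empty sum being `𝟘`. -/
def sumT (Ts : List Ty) : Ty := Ts.foldl Ty.add Ty.zero

/-- `∀X₁.…∀X_k.U`. -/
def allN : ℕ → UTy → UTy
  | 0, U => U
  | k + 1, U => .all (allN k U)

/-- Lifting of type variables in a typing context (for ∀-introduction). -/
def liftCtx (Γ : List UTy) : List UTy := Γ.map (UTy.shift 1 0)

/-! ## The Add type system -/

/-- Typing judgements of the Add type system. -/
inductive Typing : List UTy → Tm → Ty → Prop
  | ax {Γ : List UTy} {n : ℕ} {U : UTy} : Γ[n]? = some U → Typing Γ (.var n) (.unit U)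
  | axZero {Γ : List UTy} : Typing Γ .zero .zero
  | equiv {Γ t T R} : Typing Γ t T → TEq T R → Typing Γ t R
  | arrI {Γ U t T} : Typing (U :: Γ) t T → Typing Γ (.lam t) (.unit (.arrow U T))
  | arrE {Γ t u} {k : ℕ} {U : UTy} {Ts : List Ty} {Vs : List (List UTy)} :
      Ts ≠ [] → Vs ≠ [] → (∀ V ∈ Vs, V.length = k) →
      Typing Γ t (sumT (Ts.map fun Ti => .unit (allN k (.arrow U Ti)))) →
      Typing Γ u (sumT (Vs.map fun Vj => .unit (UTy.msubst Vj U))) →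
      Typing Γ (.app t u)
        (sumT ((Ts.map fun Ti => Vs.map fun Vj => Ty.msubst Vj Ti).flatten))
  | addI {Γ t u T R} : Typing Γ t T → Typing Γ u R → Typing Γ (.add t u) (.add T R)
  | allE {Γ t U} (V : UTy) : Typing Γ t (.unit (.all U)) → Typing Γ t (.unit (UTy.subst 0 V U))
  | allI {Γ t U} : Typing (liftCtx Γ) t (.unit U) → Typing Γ t (.unit (.all U))

/-! ## Interpretation of types by reducibility candidates -/

/-- Extension of a valuation. -/
def consV (A : Set Tm) (ρ : ℕ → Set Tm) : ℕ → Set Tm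
  | 0 => A
  | n + 1 => ρ n

mutual
  /-- Interpretation of unit types. -/
  def interpU : UTy → (ℕ → Set Tm) → Set Tm
    | .var n, ρ => ρ n
    | .arrow U T, ρ => CArrow (interpU U ρ) (interpT T ρ)
    | .all U, ρ => {t | ∀ A : Set Tm, IsCandidate A → t ∈ interpU U (consV A ρ)}

  /-- Interpretation of types. -/
  def interpT : Ty → (ℕ → Set Tm) → Set Tm
    | .unit U, ρ => interpU U ρ
    | .add T R, ρ => CPlus (interpT T ρ) (interpT R ρ)
    | .zero, _ => clo ∅
end

/-- Lifting of a simultaneous substitution under a binder. -/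
def liftSub (σ : ℕ → Tm) : ℕ → Tm
  | 0 => .var 0
  | n + 1 => Tm.shift 1 0 (σ n)

/-- Simultaneous substitution `t_σ` of all free term variables of `t`. -/
def Tm.msubst (σ : ℕ → Tm) : Tm → Tm
  | .var n => σ n
  | .lam t => .lam (Tm.msubst (liftSub σ) t)
  | .app t u => .app (Tm.msubst σ t) (Tm.msubst σ u)
  | .add t u => .add (Tm.msubst σ t) (Tm.msubst σ u)
  | .zero => .zero

/-! ## The relations ⋖ and ≼ on types -/

/-- The relation `⋖` on unit types: `U₁ ⋖ U₂` iff either `U₂ ≡ ∀X.U₁`, or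
`U₁ ≡ ∀X.U'` and `U₂ ≡ U'[V/X]`. -/
inductive SSub : UTy → UTy → Prop
  | gen {U₁ U₂ : UTy} (X : ℕ) : UEq U₂ (UTy.genAll X U₁) → SSub U₁ U₂
  | inst {U₁ U₂ : UTy} (U' V : UTy) : UEq U₁ (.all U') → UEq U₂ (UTy.subst 0 V U') →
      SSub U₁ U₂

/-- The relation `≼`: the reflexive (with respect to `≡`) and transitive
closure of `⋖`, on types. -/
inductive TPre : Ty → Ty → Prop
  | ofEq : TEq T T' → TPre T T'
  | ofSSub {U V : UTy} : SSub U V → TPre (.unit U) (.unit V)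
  | trans : TPre T T' → TPre T' T'' → TPre T T''

/-! ## Trees and the structured type system Add_struct -/

/-- Binary trees with two kinds of leaves: `ℓ`-leaves and `𝟘`-leaves. -/
inductive ATree : Type
  | leaf : ATree
  | zleaf : ATree
  | node : ATree → ATree → ATree
  deriving DecidableEq

namespace ATree

/-- ATree composition: branch a copy of `A'` at each `ℓ`-leaf of `A`. -/
def comp : ATree → ATree → ATree
  | .leaf, A' => A'
  | .zleaf, _ => .zleaf
  | .node A B, A' => .node (comp A A') (comp B A')

/-- `LeafAt A w`: the word `w` (over `{l,r}`, here `{false,true}`) is the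
address of an `ℓ`-leaf of `A`. -/
inductive LeafAt : ATree → List Bool → Prop
  | leaf : LeafAt .leaf []
  | left {A B w} : LeafAt A w → LeafAt (.node A B) (false :: w)
  | right {A B w} : LeafAt B w → LeafAt (.node A B) (true :: w)

/-- Labelling of the `ℓ`-leaves of a tree by unit types, yielding a type. -/
def labelU : ATree → (List Bool → UTy) → Ty
  | .leaf, f => .unit (f [])
  | .zleaf, _ => .zero
  | .node A B, f => .add (labelU A fun w => f (false :: w)) (labelU B fun w => f (true :: w))

/-- Labelling of the `ℓ`-leaves of a tree by types, yielding a type. -/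
def labelT : ATree → (List Bool → Ty) → Ty
  | .leaf, f => f []
  | .zleaf, _ => .zero
  | .node A B, f => .add (labelT A fun w => f (false :: w)) (labelT B fun w => f (true :: w))

/-- Split an address of a leaf of `A ∘ A'` into the `A`-part and the `A'`-part. -/
def split : ATree → List Bool → List Bool × List Bool
  | .leaf, p => ([], p)
  | .zleaf, p => ([], p)
  | .node A _, false :: p => ((split A p).1.cons false, (split A p).2)
  | .node _ B, true :: p => ((split B p).1.cons true, (split B p).2)
  | .node _ _, [] => ([], [])

end ATree

/-- Typing derivations of the structured type system Add_struct. -/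
inductive SDeriv : List UTy → Tm → Ty → Type
  | ax (Γ : List UTy) (n : ℕ) (U : UTy) (h : Γ[n]? = some U) : SDeriv Γ (.var n) (.unit U)
  | axZero (Γ : List UTy) : SDeriv Γ .zero .zero
  | arrI {Γ U t T} (D : SDeriv (U :: Γ) t T) : SDeriv Γ (.lam t) (.unit (.arrow U T))
  | addI {Γ t u T R} (D₁ : SDeriv Γ t T) (D₂ : SDeriv Γ u R) :
      SDeriv Γ (.add t u) (.add T R)
  | allE {Γ t U} (V : UTy) (D : SDeriv Γ t (.unit (.all U))) :
      SDeriv Γ t (.unit (UTy.subst 0 V U))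
  | allI {Γ t U} (D : SDeriv (liftCtx Γ) t (.unit U)) : SDeriv Γ t (.unit (.all U))
  | arrE {Γ t u} (A A' : ATree) (k : ℕ) (U : UTy) (Tf : List Bool → Ty)
      (Vf : List Bool → List UTy)
      (hlen : ∀ v, A'.LeafAt v → (Vf v).length = k)
      (D₁ : SDeriv Γ t (A.labelU fun w => allN k (.arrow U (Tf w))))
      (D₂ : SDeriv Γ u (A'.labelU fun v => UTy.msubst (Vf v) U)) :
      SDeriv Γ (.app t u)
        ((A.comp A').labelT fun p => Ty.msubst (Vf (A.split p).2) (Tf (A.split p).1))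

/-! ## System F with pairs -/

/-- Terms of System F with pairs. -/
inductive FTm : Type
  | var : ℕ → FTm
  | lam : FTm → FTm
  | app : FTm → FTm → FTm
  | star : FTm
  | pair : FTm → FTm → FTm
  | pl : FTm → FTm
  | pr : FTm → FTm
  deriving DecidableEq

/-- Types of System F with pairs. -/
inductive FTy : Type
  | var : ℕ → FTy
  | arrow : FTy → FTy → FTy
  | all : FTy → FTy
  | one : FTy
  | prod : FTy → FTy → FTy
  deriving DecidableEq

/-- Shifting of term variables in F-terms. -/
def FTm.shift (d c : ℕ) : FTm → FTm
  | .var n => if n < c then .var n else .var (n + d)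
  | .lam t => .lam (FTm.shift d (c + 1) t)
  | .app t u => .app (FTm.shift d c t) (FTm.shift d c u)
  | .star => .star
  | .pair t u => .pair (FTm.shift d c t) (FTm.shift d c u)
  | .pl t => .pl (FTm.shift d c t)
  | .pr t => .pr (FTm.shift d c t)

/-- Substitution of the term variable `k` by `v` in an F-term. -/
def FTm.subst (k : ℕ) (v : FTm) : FTm → FTm
  | .var n => if n = k then FTm.shift k 0 v else if k < n then .var (n - 1) else .var n
  | .lam t => .lam (FTm.subst (k + 1) v t)
  | .app t u => .app (FTm.subst k v t) (FTm.subst k v u)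
  | .star => .star
  | .pair t u => .pair (FTm.subst k v t) (FTm.subst k v u)
  | .pl t => .pl (FTm.subst k v t)
  | .pr t => .pr (FTm.subst k v t)

/-- Shifting of type variables in F-types. -/
def FTy.shift (d c : ℕ) : FTy → FTy
  | .var n => if n < c then .var n else .var (n + d)
  | .arrow A B => .arrow (FTy.shift d c A) (FTy.shift d c B)
  | .all A => .all (FTy.shift d (c + 1) A)
  | .one => .one
  | .prod A B => .prod (FTy.shift d c A) (FTy.shift d c B)

/-- Substitution of the type variable `k` by `B` in an F-type. -/
def FTy.subst (k : ℕ) (B : FTy) : FTy → FTy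
  | .var n => if n = k then FTy.shift k 0 B else if k < n then .var (n - 1) else .var n
  | .arrow A A' => .arrow (FTy.subst k B A) (FTy.subst k B A')
  | .all A => .all (FTy.subst (k + 1) B A)
  | .one => .one
  | .prod A A' => .prod (FTy.subst k B A) (FTy.subst k B A')

/-- One-step reduction in System F with pairs. -/
inductive FStep : FTm → FTm → Prop
  | beta (t u : FTm) : FStep (.app (.lam t) u) (FTm.subst 0 u t)
  | plPair (t u : FTm) : FStep (.pl (.pair t u)) t
  | prPair (t u : FTm) : FStep (.pr (.pair t u)) u
  | eta (t : FTm) : FStep (.lam (.app (FTm.shift 1 0 t) (.var 0))) t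
  | sp (p : FTm) : FStep (.pair (.pl p) (.pr p)) p
  | lamCongr : FStep t t' → FStep (.lam t) (.lam t')
  | appLeft : FStep t t' → FStep (.app t u) (.app t' u)
  | appRight : FStep u u' → FStep (.app t u) (.app t u')
  | pairLeft : FStep t t' → FStep (.pair t u) (.pair t' u)
  | pairRight : FStep u u' → FStep (.pair t u) (.pair t u')
  | plCongr : FStep t t' → FStep (.pl t) (.pl t')
  | prCongr : FStep t t' → FStep (.pr t) (.pr t')

/-- Typing in System F with pairs. -/
inductive FTyping : List FTy → FTm → FTy → Prop
  | ax {Γ n A} : Γ[n]? = some A → FTyping Γ (.var n) A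
  | star {Γ} : FTyping Γ .star .one
  | lam {Γ A t B} : FTyping (A :: Γ) t B → FTyping Γ (.lam t) (.arrow A B)
  | app {Γ t u A B} : FTyping Γ t (.arrow A B) → FTyping Γ u A → FTyping Γ (.app t u) B
  | pair {Γ t u A B} : FTyping Γ t A → FTyping Γ u B → FTyping Γ (.pair t u) (.prod A B)
  | pl {Γ t A B} : FTyping Γ t (.prod A B) → FTyping Γ (.pl t) A
  | pr {Γ t A B} : FTyping Γ t (.prod A B) → FTyping Γ (.pr t) B
  | allI {Γ t A} : FTyping (Γ.map (FTy.shift 1 0)) t A → FTyping Γ t (.all A)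
  | allE {Γ t A} (B : FTy) : FTyping Γ t (.all A) → FTyping Γ t (FTy.subst 0 B A)

/-! ## The translation from Add_struct into System F with pairs -/

mutual
  /-- Translation of unit types into F-types. -/
  def transU : UTy → FTy
    | .var n => .var n
    | .arrow U T => .arrow (transU U) (transT T)
    | .all U => .all (transU U)

  /-- Translation of Add types into F-types. -/
  def transT : Ty → FTy
    | .unit U => transU U
    | .add T R => .prod (transT T) (transT R)
    | .zero => .one
end

/-- Labelling of the `ℓ`-leaves of a tree by F-terms (pairs at the nodes, `⋆`
at the `𝟘`-leaves), yielding an F-term. -/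
def ATree.labelF : ATree → (List Bool → FTm) → FTm
  | .leaf, f => f []
  | .zleaf, _ => .star
  | .node A B, f => .pair (ATree.labelF A fun w => f (false :: w))
      (ATree.labelF B fun w => f (true :: w))

/-- `π_{w̄}(t)`: the composite of projections along the mirror of the word `w`. -/
def projMirror (w : List Bool) (t : FTm) : FTm :=
  w.foldl (fun s b => if b then .pr s else .pl s) t

/-- The translation `|t|_D` of a term typed in Add_struct by a derivation `D`
into an F-term. -/
def transD : ∀ {Γ : List UTy} {t : Tm} {T : Ty}, SDeriv Γ t T → FTm
  | _, _, _, .ax _ n _ _ => .var n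
  | _, _, _, .axZero _ => .star
  | _, _, _, .arrI D => .lam (transD D)
  | _, _, _, .addI D₁ D₂ => .pair (transD D₁) (transD D₂)
  | _, _, _, .allE _ D => transD D
  | _, _, _, .allI D => transD D
  | _, _, _, .arrE A A' _ _ _ _ _ D₁ D₂ =>
      (A.comp A').labelF fun p =>
        .app (projMirror (A.split p).1 (transD D₁)) (projMirror (A.split p).2 (transD D₂))

/-! ## Structural reduction (without AC and without the rule `t+𝟎 → t`) -/

/-- One-step reduction by a rule other than `t+𝟎 → t` (and not using the
AC-equivalence, which is absent from Add_struct). -/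
inductive SStep : Tm → Tm → Prop
  | distrRight (t u s : Tm) : SStep (.app (.add t u) s) (.add (.app t s) (.app u s))
  | distrLeft (t u s : Tm) : SStep (.app t (.add u s)) (.add (.app t u) (.app t s))
  | zeroApp (t : Tm) : SStep (.app .zero t) .zero
  | appZero (t : Tm) : SStep (.app t .zero) .zero
  | beta (t v : Tm) : IsValue v → SStep (.app (.lam t) v) (Tm.subst 0 v t)
  | appLeft : SStep t t' → SStep (.app t u) (.app t' u)
  | appRight : SStep u u' → SStep (.app t u) (.app t u')
  | addLeft : SStep t t' → SStep (.add t u) (.add t' u)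
  | addRight : SStep u u' → SStep (.add t u) (.add t u')
  | lamCongr : SStep t t' → SStep (.lam t) (.lam t')

/-! ## The partial inverse translation -/

/-- Partial inverse translation on types. -/
def invTy : FTy → Option Ty
  | .var n => some (.unit (.var n))
  | .one => some .zero
  | .all A =>
    match invTy A with
    | some (.unit U) => some (.unit (.all U))
    | _ => none
  | .prod A B =>
    match invTy A, invTy B with
    | some T, some R => some (.add T R)
    | _, _ => none
  | .arrow A B =>
    match invTy A, invTy B with
    | some (.unit U), some T => some (.unit (.arrow U T))
    | _, _ => none

/-- An F-term of the shape `A[wv ↦ π_{w̄}(t) π_{v̄}(u)]` for a non-trivial tree. -/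
def IsTreeApp (s : FTm) : Prop :=
  ∃ (A A' : ATree) (t u : FTm), A.comp A' ≠ .leaf ∧ A.comp A' ≠ .zleaf ∧
    s = (A.comp A').labelF fun p =>
      .app (projMirror (A.split p).1 t) (projMirror (A.split p).2 u)

/-- The partial inverse translation on F-terms, as a relation. -/
inductive InvTm : FTm → Tm → Prop
  | var (n : ℕ) : InvTm (.var n) (.var n)
  | star : InvTm .star .zero
  | lam : InvTm t t' → InvTm (.lam t) (.lam t')
  | app : InvTm t t' → InvTm u u' → InvTm (.app t u) (.app t' u')
  | treeApp (A A' : ATree) {t u : FTm} {t' u' : Tm} :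
      A.comp A' ≠ .leaf → A.comp A' ≠ .zleaf → InvTm t t' → InvTm u u' →
      InvTm ((A.comp A').labelF fun p =>
          .app (projMirror (A.split p).1 t) (projMirror (A.split p).2 u))
        (.app t' u')
  | pair : ¬ IsTreeApp (.pair t u) → InvTm t t' → InvTm u u' →
      InvTm (.pair t u) (.add t' u')

/-! ## Auxiliary development for ≼-subsumption -/

/-- Lift a renaming of type variables under a binder. -/
def liftR (r : ℕ → ℕ) : ℕ → ℕ
  | 0 => 0
  | n + 1 => r n + 1

mutual
  /-- Renaming of free type variables in unit types. -/
  def UTy.ren (r : ℕ → ℕ) : UTy → UTy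
    | .var n => .var (r n)
    | .arrow U T => .arrow (UTy.ren r U) (Ty.ren r T)
    | .all U => .all (UTy.ren (liftR r) U)
  /-- Renaming of free type variables in types. -/
  def Ty.ren (r : ℕ → ℕ) : Ty → Ty
    | .unit U => .unit (UTy.ren r U)
    | .add T R => .add (Ty.ren r T) (Ty.ren r R)
    | .zero => .zero
end

/-- Iterated lifting. -/
def liftRN : ℕ → (ℕ → ℕ) → ℕ → ℕ
  | 0, r => r
  | k + 1, r => liftRN k (liftR r)

theorem liftRN_succ (k : ℕ) (r : ℕ → ℕ) : liftRN (k + 1) r = liftR (liftRN k r) := by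
  induction k generalizing r with
  | zero => rfl
  | succ k ih =>
    show liftRN (k + 1) (liftR r) = _
    rw [ih]
    rfl

theorem liftRN_apply (k : ℕ) (r : ℕ → ℕ) (n : ℕ) :
    liftRN k r n = if n < k then n else r (n - k) + k := by
  induction k generalizing r n with
  | zero => simp [liftRN]
  | succ k ih =>
    show liftRN k (liftR r) n = _
    rw [ih]
    rcases lt_trichotomy n k with h | h | h
    · simp [h, Nat.lt_succ_of_lt h]
    · subst h
      simp [Nat.lt_irrefl, Nat.lt_succ_self, liftR]
    · have h1 : ¬ n < k := by omega
      have h2 : ¬ n < k + 1 := by omega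
      have h3 : n - k = (n - (k + 1)) + 1 := by omega
      simp only [h1, h2, if_neg, ite_false, h3, liftR]
      omega

mutual
  theorem UTy.ren_congr : ∀ (U : UTy) (r r' : ℕ → ℕ),
      (∀ n, UTy.Free n U → r n = r' n) → UTy.ren r U = UTy.ren r' U
    | .var n, r, r', h => by
      simp only [UTy.ren]
      rw [h n (by simp [UTy.Free])]
    | .arrow U T, r, r', h => by
      simp only [UTy.ren]
      rw [UTy.ren_congr U r r' (fun n hn => h n (by simp [UTy.Free]; exact Or.inl hn)),
        Ty.ren_congr T r r' (fun n hn => h n (by simp [UTy.Free]; exact Or.inr hn))]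
    | .all U, r, r', h => by
      simp only [UTy.ren]
      rw [UTy.ren_congr U (liftR r) (liftR r') ?_]
      intro n hn
      match n with
      | 0 => rfl
      | m + 1 =>
        show r m + 1 = r' m + 1
        rw [h m (by simp [UTy.Free]; exact hn)]
  theorem Ty.ren_congr : ∀ (T : Ty) (r r' : ℕ → ℕ),
      (∀ n, Ty.Free n T → r n = r' n) → Ty.ren r T = Ty.ren r' T
    | .unit U, r, r', h => by
      simp only [Ty.ren]
      rw [UTy.ren_congr U r r' (fun n hn => h n (by simp [Ty.Free]; exact hn))]
    | .add T R, r, r', h => by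
      simp only [Ty.ren]
      rw [Ty.ren_congr T r r' (fun n hn => h n (by simp [Ty.Free]; exact Or.inl hn)),
        Ty.ren_congr R r r' (fun n hn => h n (by simp [Ty.Free]; exact Or.inr hn))]
    | .zero, _, _, _ => rfl
end

mutual
  theorem UTy.ren_ren : ∀ (U : UTy) (r₁ r₂ : ℕ → ℕ),
      UTy.ren r₁ (UTy.ren r₂ U) = UTy.ren (fun n => r₁ (r₂ n)) U
    | .var n, _, _ => rfl
    | .arrow U T, r₁, r₂ => by
      simp only [UTy.ren, UTy.ren_ren U, Ty.ren_ren T]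
    | .all U, r₁, r₂ => by
      simp only [UTy.ren, UTy.ren_ren U]
      have e : (fun n => liftR r₁ (liftR r₂ n)) = liftR (fun n => r₁ (r₂ n)) := by
        funext n; cases n <;> rfl
      rw [e]
  theorem Ty.ren_ren : ∀ (T : Ty) (r₁ r₂ : ℕ → ℕ),
      Ty.ren r₁ (Ty.ren r₂ T) = Ty.ren (fun n => r₁ (r₂ n)) T
    | .unit U, r₁, r₂ => by simp only [Ty.ren, UTy.ren_ren U]
    | .add T R, r₁, r₂ => by simp only [Ty.ren, Ty.ren_ren T, Ty.ren_ren R]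
    | .zero, _, _ => rfl
end

mutual
  theorem UTy.ren_id : ∀ (U : UTy) (r : ℕ → ℕ), (∀ n, r n = n) → UTy.ren r U = U
    | .var n, r, h => by simp [UTy.ren, h]
    | .arrow U T, r, h => by
      simp only [UTy.ren]
      rw [UTy.ren_id U r h, Ty.ren_id T r h]
    | .all U, r, h => by
      simp only [UTy.ren]
      rw [UTy.ren_id U (liftR r) ?_]
      intro n
      cases n with
      | zero => rfl
      | succ m => show r m + 1 = m + 1; rw [h m]
  theorem Ty.ren_id : ∀ (T : Ty) (r : ℕ → ℕ), (∀ n, r n = n) → Ty.ren r T = T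
    | .unit U, r, h => by simp only [Ty.ren]; rw [UTy.ren_id U r h]
    | .add T R, r, h => by simp only [Ty.ren]; rw [Ty.ren_id T r h, Ty.ren_id R r h]
    | .zero, _, _ => rfl
end

mutual
  theorem UTy.shift_eq_ren : ∀ (U : UTy) (d c : ℕ),
      UTy.shift d c U = UTy.ren (liftRN c (· + d)) U
    | .var n, d, c => by
      by_cases h : n < c
      · simp [UTy.shift, UTy.ren, liftRN_apply, h]
      · simp only [UTy.shift, UTy.ren, liftRN_apply, h, if_neg, ite_false]
        congr 1
        omega
    | .arrow U T, d, c => by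
      simp only [UTy.shift, UTy.ren, UTy.shift_eq_ren U, Ty.shift_eq_ren T]
    | .all U, d, c => by
      simp only [UTy.shift, UTy.ren, UTy.shift_eq_ren U, liftRN_succ]
  theorem Ty.shift_eq_ren : ∀ (T : Ty) (d c : ℕ),
      Ty.shift d c T = Ty.ren (liftRN c (· + d)) T
    | .unit U, d, c => by simp only [Ty.shift, Ty.ren, UTy.shift_eq_ren U]
    | .add T R, d, c => by simp only [Ty.shift, Ty.ren, Ty.shift_eq_ren T, Ty.shift_eq_ren R]
    | .zero, _, _ => rfl
end

theorem UTy.ren_shift0 (V : UTy) (k : ℕ) (r : ℕ → ℕ) :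
    UTy.ren (liftRN k r) (UTy.shift k 0 V) = UTy.shift k 0 (UTy.ren r V) := by
  rw [UTy.shift_eq_ren, UTy.shift_eq_ren, UTy.ren_ren, UTy.ren_ren]
  apply UTy.ren_congr
  intro n _
  show liftRN k r (liftRN 0 (· + k) n) = liftRN 0 (· + k) (r n)
  show liftRN k r (n + k) = r n + k
  have h : ¬ n + k < k := by omega
  simp [liftRN_apply, h]

mutual
  theorem UTy.ren_subst : ∀ (U : UTy) (k : ℕ) (r : ℕ → ℕ) (V : UTy),
      UTy.ren (liftRN k r) (UTy.subst k V U)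
        = UTy.subst k (UTy.ren r V) (UTy.ren (liftRN (k + 1) r) U)
    | .var n, k, r, V => by
      by_cases h1 : n = k
      · subst h1
        have e1 : liftRN (n + 1) r n = n := by simp [liftRN_apply]
        simp only [UTy.subst, UTy.ren, if_pos rfl, e1]
        exact UTy.ren_shift0 V n r
      · by_cases h2 : k < n
        · have e1 : liftRN (k + 1) r n = r (n - (k + 1)) + (k + 1) := by
            have : ¬ n < k + 1 := by omega
            simp [liftRN_apply, this]
          have e2 : liftRN k r (n - 1) = r (n - 1 - k) + k := by
            have : ¬ n - 1 < k := by omega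
            simp [liftRN_apply, this]
          have h3 : ¬ r (n - (k + 1)) + (k + 1) = k := by omega
          have h4 : k < r (n - (k + 1)) + (k + 1) := by omega
          have h5 : n - 1 - k = n - (k + 1) := by omega
          rw [h5] at e2
          simp only [UTy.subst, UTy.ren, if_neg h1, if_pos h2, e1, if_neg h3, if_pos h4, e2]
          congr 1
        · have h3 : n < k := by omega
          have e1 : liftRN (k + 1) r n = n := by simp [liftRN_apply]; omega
          have e2 : liftRN k r n = n := by simp [liftRN_apply, h3]
          simp only [UTy.subst, UTy.ren, if_neg h1, if_neg h2, e1, e2]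
    | .arrow U T, k, r, V => by
      simp only [UTy.subst, UTy.ren, UTy.ren_subst U, Ty.ren_subst T]
    | .all U, k, r, V => by
      simp only [UTy.subst, UTy.ren, ← liftRN_succ, UTy.ren_subst U (k + 1)]
  theorem Ty.ren_subst : ∀ (T : Ty) (k : ℕ) (r : ℕ → ℕ) (V : UTy),
      Ty.ren (liftRN k r) (Ty.subst k V T)
        = Ty.subst k (UTy.ren r V) (Ty.ren (liftRN (k + 1) r) T)
    | .unit U, k, r, V => by simp only [Ty.subst, Ty.ren, UTy.ren_subst U]
    | .add T R, k, r, V => by simp only [Ty.subst, Ty.ren, Ty.ren_subst T, Ty.ren_subst R]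
    | .zero, _, _, _ => rfl
end

theorem UTy.ren_subst0 (U : UTy) (r : ℕ → ℕ) (V : UTy) :
    UTy.ren r (UTy.subst 0 V U) = UTy.subst 0 (UTy.ren r V) (UTy.ren (liftR r) U) :=
  UTy.ren_subst U 0 r V

theorem Ty.ren_subst0 (T : Ty) (r : ℕ → ℕ) (V : UTy) :
    Ty.ren r (Ty.subst 0 V T) = Ty.subst 0 (UTy.ren r V) (Ty.ren (liftR r) T) :=
  Ty.ren_subst T 0 r V

mutual
  theorem UTy.absAux_eq_ren : ∀ (U : UTy) (X c : ℕ),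
      UTy.absAux X c U = UTy.ren (liftRN c (fun n => if n = X then 0 else n + 1)) U
    | .var n, X, c => by
      by_cases h1 : n = X + c
      · subst h1
        have e : liftRN c (fun n => if n = X then 0 else n + 1) (X + c) = c := by
          have h : ¬ X + c < c := by omega
          simp [liftRN_apply, h]
      
        simp [UTy.absAux, UTy.ren, e]
      · by_cases h2 : c ≤ n
        · have e : liftRN c (fun n => if n = X then 0 else n + 1) n = n + 1 := by
            have h : ¬ n < c := by omega
            have h' : ¬ n - c = X := by omega
            simp [liftRN_apply, h, h']
            omega
          simp [UTy.absAux, UTy.ren, h1, h2, e]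
        · have e : liftRN c (fun n => if n = X then 0 else n + 1) n = n := by
            have h : n < c := by omega
            simp [liftRN_apply, h]
          simp [UTy.absAux, UTy.ren, h1, h2, e]
    | .arrow U T, X, c => by
      simp only [UTy.absAux, UTy.ren, UTy.absAux_eq_ren U, Ty.absAux_eq_ren T]
    | .all U, X, c => by
      simp only [UTy.absAux, UTy.ren, UTy.absAux_eq_ren U, liftRN_succ]
  theorem Ty.absAux_eq_ren : ∀ (T : Ty) (X c : ℕ),
      Ty.absAux X c T = Ty.ren (liftRN c (fun n => if n = X then 0 else n + 1)) T
    | .unit U, X, c => by simp only [Ty.absAux, Ty.ren, UTy.absAux_eq_ren U]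
    | .add T R, X, c => by
      simp only [Ty.absAux, Ty.ren, Ty.absAux_eq_ren T, Ty.absAux_eq_ren R]
    | .zero, _, _ => rfl
end

theorem UTy.genAll_eq_ren (X : ℕ) (U : UTy) :
    UTy.genAll X U = .all (UTy.ren (fun n => if n = X then 0 else n + 1) U) := by
  simp only [UTy.genAll, UTy.absAux_eq_ren]
  rfl

/-! Bounds on free type variables -/

mutual
  def UTy.fvb : UTy → ℕ
    | .var n => n + 1
    | .arrow U T => max (UTy.fvb U) (Ty.fvb T)
    | .all U => UTy.fvb U
  def Ty.fvb : Ty → ℕ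
    | .unit U => UTy.fvb U
    | .add T R => max (Ty.fvb T) (Ty.fvb R)
    | .zero => 0
end

mutual
  theorem UTy.free_lt_fvb : ∀ (U : UTy) (n : ℕ), UTy.Free n U → n < UTy.fvb U
    | .var m, n, h => by
      simp [UTy.Free] at h
      simp [UTy.fvb]
      omega
    | .arrow U T, n, h => by
      simp only [UTy.Free] at h
      simp only [UTy.fvb]
      rcases h with h | h
      · exact lt_max_of_lt_left (UTy.free_lt_fvb U n h)
      · exact lt_max_of_lt_right (Ty.free_lt_fvb T n h)
    | .all U, n, h => by
      simp only [UTy.Free] at h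
      simp only [UTy.fvb]
      have := UTy.free_lt_fvb U (n + 1) h
      omega
  theorem Ty.free_lt_fvb : ∀ (T : Ty) (n : ℕ), Ty.Free n T → n < Ty.fvb T
    | .unit U, n, h => by
      simp only [Ty.Free] at h
      exact UTy.free_lt_fvb U n h
    | .add T R, n, h => by
      simp only [Ty.Free] at h
      simp only [Ty.fvb]
      rcases h with h | h
      · exact lt_max_of_lt_left (Ty.free_lt_fvb T n h)
      · exact lt_max_of_lt_right (Ty.free_lt_fvb R n h)
    | .zero, n, h => by simp [Ty.Free] at h
end

/-! Equivalence is closed under renaming -/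

theorem ueq_ren {U V : UTy} (h : UEq U V) : ∀ r, UEq (UTy.ren r U) (UTy.ren r V) :=
  UEq.rec (motive_1 := fun U V _ => ∀ r, UEq (UTy.ren r U) (UTy.ren r V))
    (motive_2 := fun T R _ => ∀ r, TEq (Ty.ren r T) (Ty.ren r R))
    (fun _ _ => .refl _)
    (fun _ ih r => .symm (ih r))
    (fun _ _ ih1 ih2 r => .trans (ih1 r) (ih2 r))
    (fun _ _ ih1 ih2 r => .arrow (ih1 r) (ih2 r))
    (fun _ ih r => .all (ih (liftR r)))
    (fun _ _ => .refl _)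
    (fun _ ih r => .symm (ih r))
    (fun _ _ ih1 ih2 r => .trans (ih1 r) (ih2 r))
    (fun _ ih r => .unit (ih r))
    (fun _ _ ih1 ih2 r => .addCongr (ih1 r) (ih2 r))
    (fun _ _ _ => .comm _ _)
    (fun _ _ _ _ => .assoc _ _ _)
    (fun _ _ => .zero _)
    h

theorem teq_ren {T R : Ty} (h : TEq T R) : ∀ r, TEq (Ty.ren r T) (Ty.ren r R) :=
  TEq.rec (motive_1 := fun U V _ => ∀ r, UEq (UTy.ren r U) (UTy.ren r V))
    (motive_2 := fun T R _ => ∀ r, TEq (Ty.ren r T) (Ty.ren r R))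
    (fun _ _ => .refl _)
    (fun _ ih r => .symm (ih r))
    (fun _ _ ih1 ih2 r => .trans (ih1 r) (ih2 r))
    (fun _ _ ih1 ih2 r => .arrow (ih1 r) (ih2 r))
    (fun _ ih r => .all (ih (liftR r)))
    (fun _ _ => .refl _)
    (fun _ ih r => .symm (ih r))
    (fun _ _ ih1 ih2 r => .trans (ih1 r) (ih2 r))
    (fun _ ih r => .unit (ih r))
    (fun _ _ ih1 ih2 r => .addCongr (ih1 r) (ih2 r))
    (fun _ _ _ => .comm _ _)
    (fun _ _ _ _ => .assoc _ _ _)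
    (fun _ _ => .zero _)
    h

/-! Renaming lemmas for the type constructions used in typing rules -/

theorem allN_ren : ∀ (k : ℕ) (r : ℕ → ℕ) (U : UTy),
    UTy.ren r (allN k U) = allN k (UTy.ren (liftRN k r) U)
  | 0, r, U => rfl
  | k + 1, r, U => by
    show UTy.all (UTy.ren (liftR r) (allN k U)) = UTy.all (allN k (UTy.ren (liftRN (k + 1) r) U))
    rw [allN_ren k (liftR r) U]
    rfl

/-- Renaming of a vector of instantiation types. -/
def renVec (r : ℕ → ℕ) : List UTy → List UTy
  | [] => []
  | V :: Vs => UTy.ren (liftRN Vs.length r) V :: renVec r Vs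

@[simp] theorem renVec_length (r : ℕ → ℕ) : ∀ (Vs : List UTy), (renVec r Vs).length = Vs.length
  | [] => rfl
  | V :: Vs => by simp [renVec, renVec_length r Vs]

theorem umsubst_ren : ∀ (Vs : List UTy) (U : UTy) (r : ℕ → ℕ),
    UTy.ren r (UTy.msubst Vs U) = UTy.msubst (renVec r Vs) (UTy.ren (liftRN Vs.length r) U)
  | [], U, r => rfl
  | V :: Vs, U, r => by
    show UTy.ren r (UTy.msubst Vs (UTy.subst 0 V U))
      = UTy.msubst (renVec r Vs) (UTy.subst 0 (UTy.ren (liftRN Vs.length r) V)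
          (UTy.ren (liftRN (V :: Vs).length r) U))
    rw [umsubst_ren Vs _ r]
    congr 1
    rw [UTy.ren_subst0]
    congr 1
    show _ = UTy.ren (liftRN (Vs.length + 1) r) U
    rw [liftRN_succ]

theorem tmsubst_ren : ∀ (Vs : List UTy) (T : Ty) (r : ℕ → ℕ),
    Ty.ren r (Ty.msubst Vs T) = Ty.msubst (renVec r Vs) (Ty.ren (liftRN Vs.length r) T)
  | [], T, r => rfl
  | V :: Vs, T, r => by
    show Ty.ren r (Ty.msubst Vs (Ty.subst 0 V T))
      = Ty.msubst (renVec r Vs) (Ty.subst 0 (UTy.ren (liftRN Vs.length r) V)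
          (Ty.ren (liftRN (V :: Vs).length r) T))
    rw [tmsubst_ren Vs _ r]
    congr 1
    rw [Ty.ren_subst0]
    congr 1
    show _ = Ty.ren (liftRN (Vs.length + 1) r) T
    rw [liftRN_succ]

theorem foldl_add_ren (r : ℕ → ℕ) : ∀ (L : List Ty) (A : Ty),
    Ty.ren r (L.foldl Ty.add A) = (L.map (Ty.ren r)).foldl Ty.add (Ty.ren r A)
  | [], A => rfl
  | T :: L, A => by
    show Ty.ren r (L.foldl Ty.add (A.add T)) = _
    rw [foldl_add_ren r L (A.add T)]
    rfl

theorem sumT_ren (r : ℕ → ℕ) (L : List Ty) : Ty.ren r (sumT L) = sumT (L.map (Ty.ren r)) :=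
  foldl_add_ren r L Ty.zero

/-! Typing is closed under renaming of type variables -/

theorem typing_ren {Γ : List UTy} {t : Tm} {T : Ty} (h : Typing Γ t T) :
    ∀ r : ℕ → ℕ, Typing (Γ.map (UTy.ren r)) t (Ty.ren r T) := by
  induction h with
  | ax hget =>
    intro r
    exact Typing.ax (by rw [List.getElem?_map, hget]; rfl)
  | axZero => intro r; exact Typing.axZero
  | equiv _ heq ih => intro r; exact Typing.equiv (ih r) (teq_ren heq r)
  | arrI _ ih => intro r; exact Typing.arrI (ih r)
  | addI _ _ ih1 ih2 => intro r; exact Typing.addI (ih1 r) (ih2 r)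
  | allE V _ ih =>
    intro r
    show Typing _ _ (.unit (UTy.ren r (UTy.subst 0 V _)))
    rw [UTy.ren_subst0]
    exact Typing.allE (UTy.ren r V) (ih r)
  | @allI Γ t U _ ih =>
    intro r
    apply Typing.allI
    have e : liftCtx (List.map (UTy.ren r) Γ) = (liftCtx Γ).map (UTy.ren (liftR r)) := by
      simp only [liftCtx, List.map_map]
      apply List.map_congr_left
      intro W _
      show UTy.shift 1 0 (UTy.ren r W) = UTy.ren (liftR r) (UTy.shift 1 0 W)
      rw [UTy.shift_eq_ren, UTy.shift_eq_ren, UTy.ren_ren, UTy.ren_ren]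
      apply UTy.ren_congr
      intro n _
      rfl
    rw [e]
    exact ih (liftR r)
  | @arrE Γ t u k U Ts Vs hTs hVs hlen h1 h2 ih1 ih2 =>
    intro r
    have goal_eq : Ty.ren r (sumT ((Ts.map fun Ti => Vs.map fun Vj => Ty.msubst Vj Ti).flatten))
        = sumT ((((Ts.map (Ty.ren (liftRN k r))).map fun Ti =>
            (Vs.map (renVec r)).map fun Vj => Ty.msubst Vj Ti)).flatten) := by
      rw [sumT_ren, List.map_flatten]
      congr 1
      simp only [List.map_map]
      congr 1
      apply List.map_congr_left
      intro Ti _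
      simp only [Function.comp_apply, List.map_map]
      apply List.map_congr_left
      intro Vj hVj
      simp only [Function.comp_apply]
      show Ty.ren r (Ty.msubst Vj Ti) = Ty.msubst (renVec r Vj) (Ty.ren (liftRN k r) Ti)
      rw [tmsubst_ren, hlen Vj hVj]
    rw [goal_eq]
    apply Typing.arrE (U := UTy.ren (liftRN k r) U)
    · simp [hTs]
    · simp [hVs]
    · intro V hV
      simp only [List.mem_map] at hV
      obtain ⟨Vj, hVj, rfl⟩ := hV
      rw [renVec_length, hlen Vj hVj]
    · have e : (Ts.map (Ty.ren (liftRN k r))).map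
          (fun Ti => Ty.unit (allN k (UTy.arrow (UTy.ren (liftRN k r) U) Ti)))
          = (Ts.map fun Ti => Ty.unit (allN k (UTy.arrow U Ti))).map (Ty.ren r) := by
        simp only [List.map_map]
        apply List.map_congr_left
        intro Ti _
        show Ty.unit (allN k (UTy.arrow (UTy.ren (liftRN k r) U) (Ty.ren (liftRN k r) Ti)))
          = Ty.ren r (Ty.unit (allN k (UTy.arrow U Ti)))
        show _ = Ty.unit (UTy.ren r (allN k (UTy.arrow U Ti)))
        rw [allN_ren]
        rfl
      rw [e, ← sumT_ren]
      exact ih1 r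
    · have e : (Vs.map (renVec r)).map
          (fun Vj => Ty.unit (UTy.msubst Vj (UTy.ren (liftRN k r) U)))
          = (Vs.map fun Vj => Ty.unit (UTy.msubst Vj U)).map (Ty.ren r) := by
        simp only [List.map_map]
        apply List.map_congr_left
        intro Vj hVj
        show Ty.unit (UTy.msubst (renVec r Vj) (UTy.ren (liftRN k r) U))
          = Ty.ren r (Ty.unit (UTy.msubst Vj U))
        show _ = Ty.unit (UTy.ren r (UTy.msubst Vj U))
        rw [umsubst_ren, hlen Vj hVj]
      rw [e, ← sumT_ren]
      exact ih2 r

/-! ≼ along the renaming `(· + N)` -/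

theorem tpre_ren {T T' : Ty} (h : TPre T T') :
    ∀ (Γ : List UTy) (t : Tm) (N : ℕ),
      (∀ W ∈ Γ, ∀ n, N ≤ n → ¬ UTy.Free n W) →
      Typing Γ t (Ty.ren (· + N) T) → Typing Γ t (Ty.ren (· + N) T') := by
  induction h with
  | ofEq heq => intro Γ t N _ ht; exact Typing.equiv ht (teq_ren heq _)
  | trans _ _ ih1 ih2 => intro Γ t N hΓ ht; exact ih2 Γ t N hΓ (ih1 Γ t N hΓ ht)
  | @ofSSub U₁ U₂ hss =>
    intro Γ t N hΓ ht
    cases hss with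
    | inst U' V h1 h2 =>
      have ht' : Typing Γ t (.unit (.all (UTy.ren (liftR (· + N)) U'))) :=
        Typing.equiv ht (TEq.unit (ueq_ren h1 (· + N)))
      have ht'' := Typing.allE (UTy.ren (· + N) V) ht'
      rw [← UTy.ren_subst0] at ht''
      exact Typing.equiv ht'' (TEq.unit (ueq_ren h2 (· + N)).symm)
    | gen X h1 =>
      have key : UTy.ren (· + N) (UTy.genAll X U₁)
          = .all (UTy.ren (fun n => if n = X + N then 0 else n + 1) (UTy.ren (· + N) U₁)) := by
        rw [UTy.genAll_eq_ren]
        show UTy.all (UTy.ren (liftR (· + N)) (UTy.ren (fun n => if n = X then 0 else n + 1) U₁)) = _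
        rw [UTy.ren_ren, UTy.ren_ren]
        congr 1
        apply UTy.ren_congr
        intro n _
        by_cases hn : n = X
        · subst hn; simp [liftR]
        · have hn' : ¬ n + N = X + N := by omega
          simp [hn, hn', liftR]
      set rY : ℕ → ℕ := fun n => if n = X + N then 0 else n + 1 with hrY
      have h2 : Typing (Γ.map (UTy.ren rY)) t (.unit (UTy.ren rY (UTy.ren (· + N) U₁))) :=
        typing_ren ht rY
      have hctx : Γ.map (UTy.ren rY) = liftCtx Γ := by
        apply List.map_congr_left
        intro W hW
        show UTy.ren rY W = UTy.shift 1 0 W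
        rw [UTy.shift_eq_ren]
        apply UTy.ren_congr
        intro n hn
        have hnN : n < N := by
          by_contra hc
          exact hΓ W hW n (by omega) hn
        have : ¬ n = X + N := by omega
        simp [hrY, this, liftRN]
      rw [hctx] at h2
      have h3 : Typing Γ t (.unit (.all (UTy.ren rY (UTy.ren (· + N) U₁)))) := Typing.allI h2
      refine Typing.equiv h3 (TEq.unit ?_)
      have := ueq_ren h1 (· + N)
      rw [key] at this
      exact this.symm

theorem le_foldr_max : ∀ (L : List ℕ), ∀ a ∈ L, a ≤ L.foldr max 0
  | [], a, ha => by simp at ha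
  | b :: L, a, ha => by
    simp only [List.mem_cons] at ha
    simp only [List.foldr]
    rcases ha with rfl | ha
    · exact le_max_left _ _
    · exact le_trans (le_foldr_max L a ha) (le_max_right _ _)

/-- **≼-subsumption** (Lemma 6).  For any context `Γ`, term `t` and unit types
`U`, `U'` such that `U ≼ U'` and no free type variable of `U` occurs in `Γ`,
if `Γ ⊢ t : U` then `Γ ⊢ t : U'`. -/
theorem pre_subsumption {Γ : List UTy} {t : Tm} {U U' : UTy}
    (hsub : TPre (.unit U) (.unit U'))
    (hfresh : ∀ n, UTy.Free n U → ∀ W ∈ Γ, ¬ UTy.Free n W)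
    (h : Typing Γ t (.unit U)) :
    Typing Γ t (.unit U') := by
  classical
  set N : ℕ := ((UTy.fvb U) :: (UTy.fvb U') :: Γ.map UTy.fvb).foldr max 0 with hN
  have hΓN : ∀ W ∈ Γ, UTy.fvb W ≤ N := fun W hW =>
    le_foldr_max _ _
      (List.mem_cons_of_mem _ (List.mem_cons_of_mem _ (List.mem_map_of_mem (f := UTy.fvb) hW)))
  have hΓfree : ∀ W ∈ Γ, ∀ n, N ≤ n → ¬ UTy.Free n W := by
    intro W hW n hn hf
    have := UTy.free_lt_fvb W n hf
    have := hΓN W hW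
    omega
  -- Bridge 1 : rename the free variables of `U` out of the way.
  set r₁ : ℕ → ℕ := fun n => if UTy.Free n U then n + N else n with hr₁
  have h1 := typing_ren h r₁
  have hctx1 : Γ.map (UTy.ren r₁) = Γ := by
    have : Γ.map (UTy.ren r₁) = Γ.map id := by
      apply List.map_congr_left
      intro W hW
      have e : UTy.ren r₁ W = UTy.ren (fun n => n) W := by
        apply UTy.ren_congr
        intro n hn
        show (if UTy.Free n U then n + N else n) = n
        rw [if_neg]
        intro hU
        exact hfresh n hU W hW hn
      rw [e, UTy.ren_id W _ (fun n => rfl)]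
      rfl
    rw [this, List.map_id]
  have htype1 : UTy.ren r₁ U = UTy.ren (· + N) U := by
    apply UTy.ren_congr
    intro n hn
    show (if UTy.Free n U then n + N else n) = n + N
    rw [if_pos hn]
  rw [hctx1] at h1
  have h1' : Typing Γ t (Ty.ren (· + N) (.unit U)) := by
    show Typing Γ t (.unit (UTy.ren (· + N) U))
    rw [← htype1]
    exact h1
  -- the renamed subsumption
  have h2 := tpre_ren hsub Γ t N hΓfree h1'
  -- Bridge 2 : rename back.
  set r₂ : ℕ → ℕ := fun n => if N ≤ n then n - N else n with hr₂
  have h3 := typing_ren h2 r₂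
  have hctx2 : Γ.map (UTy.ren r₂) = Γ := by
    have : Γ.map (UTy.ren r₂) = Γ.map id := by
      apply List.map_congr_left
      intro W hW
      have e : UTy.ren r₂ W = UTy.ren (fun n => n) W := by
        apply UTy.ren_congr
        intro n hn
        show (if N ≤ n then n - N else n) = n
        rw [if_neg]
        have := UTy.free_lt_fvb W n hn
        have := hΓN W hW
        omega
      rw [e, UTy.ren_id W _ (fun n => rfl)]
      rfl
    rw [this, List.map_id]
  rw [hctx2] at h3
  have htype2 : Ty.ren r₂ (Ty.ren (· + N) (.unit U')) = .unit U' := by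
    show Ty.unit (UTy.ren r₂ (UTy.ren (· + N) U')) = .unit U'
    rw [UTy.ren_ren]
    congr 1
    apply UTy.ren_id
    intro n
    show (if N ≤ n + N then n + N - N else n + N) = n
    rw [if_pos (by omega)]
    omega
  rw [htype2] at h3
  exact h3
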